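/- Let f : R₁ → R₂ be a good epimorphism of multiplicative hyperrings, α an endomorphism of both commuting with f, and I₁ a C-hyperideal of R₁ containing Ker f. Then I₁ is an α-prime hyperideal of R₁ if and only if f(I₁) is an α-prime hyperideal of R₂. -/
import Mathlib


open Pointwise

namespace HyperPaper

/-- A commutative multiplicative hyperring on an additive commutative group:
the hypermultiplication is associative, commutative, subdistributive over `+`,
and compatible with negation. -/
structure MulHyperring (R : Type*) [AddCommGroup R] where
  hmul : R → R → Set R
  nonempty : ∀ a b, (hmul a b).Nonempty
  comm : ∀ a b, hmul a b = hmul b a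
  assoc : ∀ a b c, (⋃ t ∈ hmul a b, hmul t c) = ⋃ t ∈ hmul b c, hmul a t
  distrib : ∀ a b c, hmul a (b + c) ⊆ hmul a b + hmul a c
  hmul_neg : ∀ a b, hmul a (-b) = -(hmul a b)

variable {R : Type*} [AddCommGroup R]

/-- Product of two subsets under the hyperoperation. -/
def MulHyperring.setMul (H : MulHyperring R) (A B : Set R) : Set R :=
  ⋃ a ∈ A, ⋃ b ∈ B, H.hmul a b

/-- `H.hpow a n` is the `(n+1)`-fold hyperproduct `a ∘ a ∘ ⋯ ∘ a`. -/
def MulHyperring.hpow (H : MulHyperring R) (a : R) : ℕ → Set R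
  | 0 => {a}
  | n + 1 => H.setMul {a} (H.hpow a n)

/-- `H.hprod a l` is the hyperproduct of the list `a :: l`. -/
def MulHyperring.hprod (H : MulHyperring R) (a : R) : List R → Set R
  | [] => {a}
  | b :: l => H.setMul {a} (H.hprod b l)

/-- A hyperideal: an additive subgroup absorbing hypermultiplication. -/
structure Hyperideal (H : MulHyperring R) where
  carrier : Set R
  zero_mem : (0 : R) ∈ carrier
  sub_mem : ∀ a b, a ∈ carrier → b ∈ carrier → a - b ∈ carrier
  absorb : ∀ r x, x ∈ carrier → H.hmul r x ⊆ carrier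

/-- A C-hyperideal: any finite hyperproduct meeting it is contained in it. -/
def IsCHyperideal (H : MulHyperring R) (I : Hyperideal H) : Prop :=
  ∀ a (l : List R), (H.hprod a l ∩ I.carrier).Nonempty → H.hprod a l ⊆ I.carrier

/-- A good homomorphism between multiplicative hyperrings. -/
def IsGoodHom {R₁ R₂ : Type*} [AddCommGroup R₁] [AddCommGroup R₂]
    (H₁ : MulHyperring R₁) (H₂ : MulHyperring R₂) (f : R₁ → R₂) : Prop :=
  (∀ x y, f (x + y) = f x + f y) ∧ ∀ x y, f '' H₁.hmul x y = H₂.hmul (f x) (f y)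

/-- A good endomorphism. -/
def IsGoodEndo (H : MulHyperring R) (α : R → R) : Prop :=
  IsGoodHom H H α

/-- A proper hyperideal `I` is `α`-prime if `x ∘ y ⊆ I` implies `x ∈ I` or `α y ∈ I`. -/
def IsAlphaPrime (H : MulHyperring R) (α : R → R) (I : Hyperideal H) : Prop :=
  I.carrier ≠ Set.univ ∧
    ∀ x y, H.hmul x y ⊆ I.carrier → x ∈ I.carrier ∨ α y ∈ I.carrier

/-- A proper hyperideal `I` is prime if `x ∘ y ⊆ I` implies `x ∈ I` or `y ∈ I`. -/
def IsPrime (H : MulHyperring R) (I : Hyperideal H) : Prop :=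
  I.carrier ≠ Set.univ ∧
    ∀ x y, H.hmul x y ⊆ I.carrier → x ∈ I.carrier ∨ y ∈ I.carrier

/-- The radical `√S = {r | rⁿ ⊆ S for some n}`. -/
def radical (H : MulHyperring R) (S : Set R) : Set R :=
  {r | ∃ n : ℕ, H.hpow r n ⊆ S}

/-- The `α`-radical `ᵅ√S = {r | α(rⁿ) ⊆ S for some n}`. -/
def alphaRad (H : MulHyperring R) (α : R → R) (S : Set R) : Set R :=
  {r | ∃ n : ℕ, α '' H.hpow r n ⊆ S}

/-- The set of `α`-nilpotent elements. -/
def nilAlpha (H : MulHyperring R) (α : R → R) : Set R :=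
  {x | ∃ n : ℕ, (0 : R) ∈ α '' H.hpow x n}

/-- The `n`-fold set power of a hyperideal carrier: `idealPow H S n = S^(n+1)`. -/
def idealPow (H : MulHyperring R) (S : Set R) : ℕ → Set R
  | 0 => S
  | n + 1 => H.setMul S (idealPow H S n)

end HyperPaper

open HyperPaper

/-- For a good epimorphism `f` commuting with `α` and a C-hyperideal
`I₁ ⊇ Ker f`, `I₁` is `α`-prime iff `f(I₁)` is `α`-prime. -/
theorem stmt18 {R₁ R₂ : Type*} [AddCommGroup R₁] [AddCommGroup R₂]
    (H₁ : MulHyperring R₁) (H₂ : MulHyperring R₂) (f : R₁ → R₂)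
    (hf : IsGoodHom H₁ H₂ f) (hsurj : Function.Surjective f)
    (α₁ : R₁ → R₁) (α₂ : R₂ → R₂)
    (hα₁ : IsGoodEndo H₁ α₁) (hα₂ : IsGoodEndo H₂ α₂)
    (hcomm : ∀ r : R₁, α₂ (f r) = f (α₁ r))
    (Z₂ : Hyperideal H₂) (hZ₂ : ∀ J : Hyperideal H₂, Z₂.carrier ⊆ J.carrier)
    (I₁ : Hyperideal H₁) (hC : IsCHyperideal H₁ I₁)
    (hker : f ⁻¹' Z₂.carrier ⊆ I₁.carrier)
    (J : Hyperideal H₂) (hJ : J.carrier = f '' I₁.carrier) :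
    IsAlphaPrime H₁ α₁ I₁ ↔ IsAlphaPrime H₂ α₂ J := by
  obtain ⟨fadd, fmul⟩ := hf
  have f0 : f 0 = 0 := by
    have h := fadd 0 0
    simpa using h
  have fneg : ∀ x, f (-x) = - f x := by
    intro x
    have h := fadd x (-x)
    rw [add_neg_cancel, f0] at h
    exact eq_neg_of_add_eq_zero_right h.symm
  have fsub : ∀ x y, f (x - y) = f x - f y := by
    intro x y; rw [sub_eq_add_neg, fadd, fneg, sub_eq_add_neg]
  have hmem : ∀ x, f x ∈ J.carrier ↔ x ∈ I₁.carrier := by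
    intro x
    constructor
    · intro hx
      rw [hJ] at hx
      obtain ⟨i, hi, hfi⟩ := hx
      have hxi : x - i ∈ I₁.carrier := hker (by
        show f (x - i) ∈ Z₂.carrier
        rw [fsub, hfi, sub_self]
        exact Z₂.zero_mem)
      have hni : -i ∈ I₁.carrier := by
        have := I₁.sub_mem 0 i I₁.zero_mem hi
        simpa using this
      have := I₁.sub_mem _ _ hxi hni
      simpa using this
    · intro hx; rw [hJ]; exact ⟨x, hx, rfl⟩
  constructor
  · rintro ⟨hproper, hprime⟩
    refine ⟨?_, ?_⟩
    · intro h
      apply hproper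
      ext x
      simp only [Set.mem_univ, iff_true]
      exact (hmem x).1 (by rw [h]; trivial)
    · intro x₂ y₂ hxy
      obtain ⟨x, rfl⟩ := hsurj x₂
      obtain ⟨y, rfl⟩ := hsurj y₂
      have hsub : H₁.hmul x y ⊆ I₁.carrier := by
        intro t ht
        exact (hmem t).1 (hxy (by rw [← fmul]; exact ⟨t, ht, rfl⟩))
      rcases hprime x y hsub with h | h
      · exact Or.inl ((hmem x).2 h)
      · right; rw [hcomm]; exact (hmem _).2 h
  · rintro ⟨hproper, hprime⟩
    refine ⟨?_, ?_⟩
    · intro h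
      apply hproper
      rw [hJ, h]
      ext y
      simp only [Set.mem_univ, iff_true]
      obtain ⟨x, rfl⟩ := hsurj y
      exact ⟨x, trivial, rfl⟩
    · intro x y hsub
      have hJsub : H₂.hmul (f x) (f y) ⊆ J.carrier := by
        rw [← fmul]
        rintro _ ⟨t, ht, rfl⟩
        exact (hmem t).2 (hsub ht)
      rcases hprime (f x) (f y) hJsub with h | h
      · exact Or.inl ((hmem x).1 h)
      · right
        apply (hmem _).1
        rw [← hcomm]
        exact h
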